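/- Let G be a group and N a perfect normal subgroup of G (i.e. N = [N,N]) which has a complement in G. Then the sequence J(N) → J(G) → J(G/N) → 1 is exact, where the first map is the restriction to J(N) of the homomorphism N ⊗ N → G ⊗ G induced by the inclusion N → G, and the second map is the restriction to J(G) of the homomorphism G ⊗ G → (G/N) ⊗ (G/N) induced by the quotient map G → G/N; that is, the second map is surjective and its kernel equals the image of the first map. (Topologically this is the exact sequence π₃(SK(N,1)) → π₃(SK(G,1)) → π₃(SK(G/N,1)) → 0.) -/

import Mathlib

/- Nonabelian tensor square framework (Brown–Loday). -/

namespace NATensor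

variable (G : Type*) [Group G]

/-- The relator set for the nonabelian tensor square of `G`:
`g g' ⊗ h = (ᵍg' ⊗ ᵍh)(g ⊗ h)` and `g ⊗ h h' = (g ⊗ h)(ʰg ⊗ ʰh')`. -/
def rels : Set (FreeGroup (G × G)) :=
  {r | (∃ g g' h : G,
          r = FreeGroup.of (g * g', h) *
              (FreeGroup.of (g * g' * g⁻¹, g * h * g⁻¹) * FreeGroup.of (g, h))⁻¹) ∨
       (∃ g h h' : G,
          r = FreeGroup.of (g, h * h') *
              (FreeGroup.of (g, h) * FreeGroup.of (h * g * h⁻¹, h * h' * h⁻¹))⁻¹)}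

/-- The nonabelian tensor square `G ⊗ G`. -/
abbrev TS := PresentedGroup (rels G)

variable {G}

/-- The generator `g ⊗ h` of the nonabelian tensor square. -/
def tmul (g h : G) : TS G := PresentedGroup.of (g, h)

lemma mk_rel_eq_one {r : FreeGroup (G × G)} (hr : r ∈ rels G) :
    (PresentedGroup.mk (rels G) r : TS G) = 1 :=
  (QuotientGroup.eq_one_iff r).mpr (Subgroup.subset_normalClosure hr)

lemma tmul_rel₁ (g g' h : G) :
    tmul (g * g') h = tmul (g * g' * g⁻¹) (g * h * g⁻¹) * tmul g h := by
  have h1 := mk_rel_eq_one (G := G) (Or.inl ⟨g, g', h, rfl⟩)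
  simp only [map_mul, map_inv, mul_inv_eq_one] at h1
  exact h1

lemma tmul_rel₂ (g h h' : G) :
    tmul g (h * h') = tmul g h * tmul (h * g * h⁻¹) (h * h' * h⁻¹) := by
  have h1 := mk_rel_eq_one (G := G) (Or.inr ⟨g, h, h', rfl⟩)
  simp only [map_mul, map_inv, mul_inv_eq_one] at h1
  exact h1

variable (G)

/-- The homomorphism `κ : G ⊗ G → G`, `g ⊗ h ↦ [g,h] = g h g⁻¹ h⁻¹` (its image is `[G,G]`). -/
def kappa : TS G →* G :=
  PresentedGroup.toGroup (f := fun x : G × G => x.1 * x.2 * x.1⁻¹ * x.2⁻¹) (by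
    rintro r (⟨g, g', h, rfl⟩ | ⟨g, h, h', rfl⟩) <;>
      simp only [map_mul, map_inv, FreeGroup.lift_apply_of] <;> group)

variable {G}

@[simp] lemma kappa_tmul (g h : G) : kappa G (tmul g h) = g * h * g⁻¹ * h⁻¹ :=
  PresentedGroup.toGroup.of _

variable (G)

/-- `J(G) = ker κ ≅ π₃(SK(G,1))`. -/
def J : Subgroup (TS G) := (kappa G).ker

/-- `∇(G)`: the (normal) subgroup of `G ⊗ G` generated by the elements `x ⊗ x`. -/
def nabla : Subgroup (TS G) :=
  Subgroup.normalClosure {t | ∃ x : G, t = tmul x x}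

/-- `Δ(G)`: the (normal) subgroup of `G ⊗ G` generated by the `(x ⊗ y)(y ⊗ x)`. -/
def delta : Subgroup (TS G) :=
  Subgroup.normalClosure {t | ∃ x y : G, t = tmul x y * tmul y x}

instance : (nabla G).Normal := Subgroup.normalClosure_normal

instance : (delta G).Normal := Subgroup.normalClosure_normal

/-- The exterior square `G ∧ G = (G ⊗ G)/∇(G)`. -/
abbrev ES := TS G ⧸ nabla G

/-- The symmetric square `G ⊗̃ G = (G ⊗ G)/Δ(G)`. -/
abbrev SS := TS G ⧸ delta G

variable {G}

/-- The element `g ∧ h` of the exterior square. -/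
def emul (g h : G) : ES G := QuotientGroup.mk' (nabla G) (tmul g h)

/-- The image of `g ⊗ h` in the symmetric square. -/
def smul (g h : G) : SS G := QuotientGroup.mk' (delta G) (tmul g h)

variable {H : Type*} [Group H]

/-- The induced homomorphism `G ⊗ G → H ⊗ H` of a homomorphism `f : G → H`. -/
def tmap (f : G →* H) : TS G →* TS H :=
  PresentedGroup.toGroup (f := fun x : G × G => tmul (f x.1) (f x.2)) (by
    rintro r (⟨g, g', h, rfl⟩ | ⟨g, h, h', rfl⟩) <;>
      simp only [map_mul, map_inv, FreeGroup.lift_apply_of, mul_inv_eq_one]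
    · rw [tmul_rel₁]
    · rw [tmul_rel₂])

@[simp] lemma tmap_tmul (f : G →* H) (g h : G) :
    tmap f (tmul g h) = tmul (f g) (f h) :=
  PresentedGroup.toGroup.of _

lemma nabla_le_comap_nabla (f : G →* H) :
    nabla G ≤ MonoidHom.ker ((QuotientGroup.mk' (nabla H)).comp (tmap f)) := by
  refine Subgroup.normalClosure_le_normal ?_
  rintro _ ⟨y, rfl⟩
  simp only [SetLike.mem_coe, MonoidHom.mem_ker, MonoidHom.comp_apply, tmap_tmul,
    QuotientGroup.mk'_apply, QuotientGroup.eq_one_iff]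
  exact Subgroup.subset_normalClosure ⟨f y, rfl⟩

lemma delta_le_comap_delta (f : G →* H) :
    delta G ≤ MonoidHom.ker ((QuotientGroup.mk' (delta H)).comp (tmap f)) := by
  refine Subgroup.normalClosure_le_normal ?_
  rintro _ ⟨x, y, rfl⟩
  simp only [SetLike.mem_coe, MonoidHom.mem_ker, MonoidHom.comp_apply, map_mul, tmap_tmul,
    QuotientGroup.mk'_apply, ← QuotientGroup.mk_mul, QuotientGroup.eq_one_iff]
  exact Subgroup.subset_normalClosure ⟨f x, f y, rfl⟩

/-- The induced homomorphism `G ∧ G → H ∧ H` of a homomorphism `f : G → H`. -/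
def emap (f : G →* H) : ES G →* ES H :=
  QuotientGroup.lift (nabla G) ((QuotientGroup.mk' (nabla H)).comp (tmap f))
    (fun x hx => MonoidHom.mem_ker.mp (nabla_le_comap_nabla f hx))

@[simp] lemma emap_emul (f : G →* H) (g h : G) :
    emap f (emul g h) = emul (f g) (f h) := by
  change QuotientGroup.mk' (nabla H) (tmap f (tmul g h)) = _
  rw [tmap_tmul]
  rfl

/-- The induced homomorphism `G ⊗̃ G → H ⊗̃ H` of a homomorphism `f : G → H`. -/
def smap (f : G →* H) : SS G →* SS H :=
  QuotientGroup.lift (delta G) ((QuotientGroup.mk' (delta H)).comp (tmap f))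
    (fun x hx => MonoidHom.mem_ker.mp (delta_le_comap_delta f hx))

variable (G)

lemma nabla_le_ker_kappa : nabla G ≤ (kappa G).ker := by
  refine Subgroup.normalClosure_le_normal ?_
  rintro _ ⟨x, rfl⟩
  simp only [SetLike.mem_coe, MonoidHom.mem_ker, kappa_tmul]
  group

/-- The homomorphism `κ' : G ∧ G → G`, `g ∧ h ↦ [g,h]` (its image is `[G,G]`). -/
def kappa' : ES G →* G :=
  QuotientGroup.lift (nabla G) (kappa G)
    (fun x hx => MonoidHom.mem_ker.mp (nabla_le_ker_kappa G hx))

/-- The Schur multiplier `M(G) = ker κ' ≅ H₂(G)`. -/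
def M : Subgroup (ES G) := (kappa' G).ker

/-- `J̃(G) = J(G)/Δ(G) ≅ π₂ˢ(K(G,1))`, realized as the image of `J(G)` in `G ⊗̃ G`. -/
def Jt : Subgroup (SS G) := Subgroup.map (QuotientGroup.mk' (delta G)) (J G)

/-- `∇(G)/Δ(G)`, realized as the image of `∇(G)` in `G ⊗̃ G`. -/
def nablaBar : Subgroup (SS G) := Subgroup.map (QuotientGroup.mk' (delta G)) (nabla G)

end NATensor
namespace NATensor

variable {G : Type*} [Group G]

section Identities

lemma ts_hom_ext {H : Type*} [Group H] {f g : TS G →* H}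
    (h : ∀ a b : G, f (tmul a b) = g (tmul a b)) : f = g :=
  PresentedGroup.ext fun x => h x.1 x.2

lemma tmul_one_left (h : G) : tmul (1 : G) h = 1 := by
  have h1 := tmul_rel₁ (1 : G) 1 h
  simp only [mul_one, one_mul, inv_one] at h1
  have h2 : tmul (1:G) h * 1 = tmul (1:G) h * tmul 1 h := by simpa using h1
  exact (mul_left_cancel h2).symm

lemma tmul_one_right (g : G) : tmul g (1 : G) = 1 := by
  have h1 := tmul_rel₂ g (1 : G) 1
  simp only [mul_one, one_mul, inv_one] at h1
  have h2 : tmul g (1:G) * 1 = tmul g (1:G) * tmul g 1 := by simpa using h1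
  exact (mul_left_cancel h2).symm

/-- The conjugation action of `G` on `G ⊗ G`. -/
def phi (x : G) : TS G →* TS G := tmap (MulAut.conj x).toMonoidHom

@[simp] lemma phi_tmul (x g h : G) :
    phi x (tmul g h) = tmul (x * g * x⁻¹) (x * h * x⁻¹) := by
  simp [phi, tmap_tmul, MulAut.conj_apply]

lemma tmul_congr {a a' b b' : G} (h1 : a = a') (h2 : b = b') :
    tmul a b = tmul a' b' := by rw [h1, h2]

lemma phi_phi (x y : G) (t : TS G) : phi x (phi y t) = phi (x * y) t := by
  have h : (phi x).comp (phi y) = phi (x * y) := ts_hom_ext fun a b => by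
    simp only [MonoidHom.comp_apply, phi_tmul]
    exact tmul_congr (by group) (by group)
  exact DFunLike.congr_fun h t

lemma phi_one (t : TS G) : phi (1 : G) t = t := by
  have h : phi (1 : G) = MonoidHom.id (TS G) := ts_hom_ext fun a b => by
    simp only [phi_tmul, MonoidHom.id_apply]
    exact tmul_congr (by group) (by group)
  exact DFunLike.congr_fun h t

lemma rel1' (g g' h : G) :
    tmul (g * g') h = phi g (tmul g' h) * tmul g h := by
  rw [tmul_rel₁, phi_tmul]

lemma rel2' (g h h' : G) :
    tmul g (h * h') = tmul g h * phi h (tmul g h') := by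
  rw [tmul_rel₂, phi_tmul]

lemma tmul_inv_left (g h : G) : tmul g⁻¹ h = (phi g⁻¹ (tmul g h))⁻¹ := by
  have h1 : phi g⁻¹ (tmul g h) * tmul g⁻¹ h = 1 := by
    rw [← rel1', inv_mul_cancel, tmul_one_left]
  exact eq_inv_of_mul_eq_one_right h1

lemma tmul_inv_right (g h : G) : tmul g h⁻¹ = (phi h⁻¹ (tmul g h))⁻¹ := by
  have h1 : tmul g h⁻¹ * phi h⁻¹ (tmul g h) = 1 := by
    rw [← rel2', inv_mul_cancel, tmul_one_right]
  rw [← mul_one (tmul g h⁻¹), ← mul_inv_cancel (phi h⁻¹ (tmul g h)), ← mul_assoc, h1, one_mul]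

/-- `(A')`: `φ_a(b ⊗ c) = (ab ⊗ c)(a ⊗ c)⁻¹`. -/
lemma phi_tmul_left (a b c : G) :
    phi a (tmul b c) = tmul (a * b) c * (tmul a c)⁻¹ := by
  rw [rel1' a b c]; group

/-- `(B')`: `φ_b(a ⊗ c) = (a ⊗ b)⁻¹ (a ⊗ bc)`. -/
lemma phi_tmul_right (a b c : G) :
    phi b (tmul a c) = (tmul a b)⁻¹ * tmul a (b * c) := by
  rw [rel2' a b c]; group

lemma key_gen (g h x y : G) :
    phi (g * h) (tmul x y) * tmul g h = tmul g h * phi (h * g) (tmul x y) := by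
  have w1 : tmul (g * x) (h * y) =
      phi g (tmul x h) * (phi (g * h) (tmul x y) * (tmul g h * phi h (tmul g y))) := by
    rw [rel1' g x (h * y), rel2' x h y, rel2' g h y, map_mul, phi_phi]
    group
  have w2 : tmul (g * x) (h * y) =
      phi g (tmul x h) * (tmul g h * (phi (h * g) (tmul x y) * phi h (tmul g y))) := by
    rw [rel2' (g * x) h y, rel1' g x h, rel1' g x y, map_mul, phi_phi]
    group
  have w3 := w1.symm.trans w2
  have w4 := mul_left_cancel w3
  have w5 : phi (g * h) (tmul x y) * (tmul g h * phi h (tmul g y)) =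
      tmul g h * phi (h * g) (tmul x y) * phi h (tmul g y) := by
    rw [w4]; group
  have w6 : phi (g * h) (tmul x y) * tmul g h * phi h (tmul g y) =
      tmul g h * phi (h * g) (tmul x y) * phi h (tmul g y) := by
    rw [← w5]; group
  exact mul_right_cancel w6

lemma conj_phi (g h : G) (t : TS G) :
    tmul g h * phi (h * g) t * (tmul g h)⁻¹ = phi (g * h) t := by
  have h1 : (MulAut.conj (tmul g h)).toMonoidHom.comp (phi (h * g)) = phi (g * h) :=
    ts_hom_ext fun x y => by
      simp only [MonoidHom.comp_apply, MulEquiv.coe_toMonoidHom, MulAut.conj_apply]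
      exact mul_inv_eq_iff_eq_mul.mpr (key_gen g h x y).symm
  have h2 := DFunLike.congr_fun h1 t
  simpa [MonoidHom.comp_apply, MulEquiv.coe_toMonoidHom, MulAut.conj_apply] using h2

/-- `(I)`: conjugation by `g ⊗ h` in `G ⊗ G` is the action of `[g,h]`. -/
lemma tmul_conj (g h : G) (t : TS G) :
    tmul g h * t * (tmul g h)⁻¹ = phi (g * h * g⁻¹ * h⁻¹) t := by
  have h1 := conj_phi g h (phi ((h * g)⁻¹) t)
  rw [phi_phi, phi_phi, show (h * g) * (h * g)⁻¹ = 1 by group, phi_one,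
    show (g * h) * (h * g)⁻¹ = g * h * g⁻¹ * h⁻¹ by group] at h1
  exact h1

lemma tmul_mul_phi (g h x : G) (u : TS G) :
    tmul g h * phi x u = phi (g * h * g⁻¹ * h⁻¹ * x) u * tmul g h := by
  have h1 := tmul_conj g h (phi x u)
  rw [phi_phi] at h1
  rw [← h1]; group

lemma aux_S1 (g h k : G) :
    tmul (g * h⁻¹) k = tmul g (h⁻¹ * k * h) * tmul h⁻¹ k := by
  have h1 := rel1' h⁻¹ (h * g * h⁻¹) k
  rw [phi_tmul, show h⁻¹ * (h * g * h⁻¹) = g * h⁻¹ by group] at h1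
  rw [h1]
  congr 1
  exact tmul_congr (by group) (by group)

lemma aux_F2 (g h k : G) :
    (tmul g k)⁻¹ * phi (g * h⁻¹) (tmul h k) * tmul g (h⁻¹ * k * h) =
      phi h⁻¹ (tmul h k) := by
  have c1 : phi h⁻¹ (tmul h k) = (tmul h⁻¹ k)⁻¹ := by
    rw [tmul_inv_left h k, inv_inv]
  have c2 : phi (g * h⁻¹) (tmul h k) = tmul g k * (tmul (g * h⁻¹) k)⁻¹ := by
    rw [← phi_phi, c1, map_inv, phi_tmul_left]
    group
  rw [c1, c2, aux_S1]
  group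

lemma conj_assemble {M : Type*} [Group M] {a A B D A' B' : M}
    (h1 : a * A = A' * a) (h2 : a * B = B' * a) :
    a * (A * B * (a⁻¹ * D)) = A' * B' * D := by
  calc a * (A * B * (a⁻¹ * D)) = (a * A) * (B * (a⁻¹ * D)) := by group
    _ = (A' * a) * (B * (a⁻¹ * D)) := by rw [h1]
    _ = A' * ((a * B) * (a⁻¹ * D)) := by group
    _ = A' * ((B' * a) * (a⁻¹ * D)) := by rw [h2]
    _ = A' * B' * D := by group

/-- `(II″)`: `(ᵍh ⊗ k)·φ_k(g ⊗ h) = (g ⊗ h)(h ⊗ k)`. -/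
lemma comm_aux (g h k : G) :
    tmul (g * h * g⁻¹) k * phi k (tmul g h) = tmul g h * tmul h k := by
  -- transform F2 under φ_h
  have F2' := congrArg (phi h) (aux_F2 g h k)
  rw [map_mul, map_mul, phi_phi, phi_phi, show h * (g * h⁻¹) = h * g * h⁻¹ by group,
    show h * h⁻¹ = 1 by group, phi_one] at F2'
  have F4 : phi h (tmul g (h⁻¹ * k * h)) = (tmul g h)⁻¹ * tmul g (k * h) := by
    rw [phi_tmul_right, show h * (h⁻¹ * k * h) = k * h by group]
  rw [F4, map_inv] at F2'
  -- F2' : (phi h (tmul g k))⁻¹ * phi (h*g*h⁻¹) (tmul h k) * ((tmul g h)⁻¹ * tmul g (k*h)) = tmul h k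
  have m1 : tmul g h * (phi h (tmul g k))⁻¹ =
      (phi (g * h * g⁻¹) (tmul g k))⁻¹ * tmul g h := by
    rw [← map_inv, ← map_inv, tmul_mul_phi, show g * h * g⁻¹ * h⁻¹ * h = g * h * g⁻¹ by group]
  have m2 : tmul g h * phi (h * g * h⁻¹) (tmul h k) = phi g (tmul h k) * tmul g h := by
    rw [tmul_mul_phi, show g * h * g⁻¹ * h⁻¹ * (h * g * h⁻¹) = g by group]
  have RHSeq : tmul g h * tmul h k =
      (phi (g * h * g⁻¹) (tmul g k))⁻¹ * phi g (tmul h k) * tmul g (k * h) := by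
    conv_lhs => rw [← F2']
    exact conj_assemble m1 m2
  have G1 : tmul (g * h * g⁻¹) k =
      (phi (g * h * g⁻¹) (tmul g k))⁻¹ * (phi g (tmul h k) * tmul g k) := by
    rw [show g * h * g⁻¹ = (g * h) * g⁻¹ by group, rel1' (g * h) g⁻¹ k,
      tmul_inv_left g k, map_inv, phi_phi, rel1' g h k,
      show g * h * g⁻¹ = (g * h) * g⁻¹ by group]
  have G2 : phi k (tmul g h) = (tmul g k)⁻¹ * tmul g (k * h) := phi_tmul_right g k h
  rw [G1, G2, RHSeq]
  group

/-- `(II)`: `[g,h] ⊗ k = (g ⊗ h)·(φ_k(g ⊗ h))⁻¹`. -/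
lemma comm_tmul_left (g h k : G) :
    tmul (g * h * g⁻¹ * h⁻¹) k = tmul g h * (phi k (tmul g h))⁻¹ := by
  have h1 : tmul (g * h * g⁻¹ * h⁻¹) k =
      phi (g * h * g⁻¹ * h⁻¹) ((tmul h k)⁻¹) * tmul (g * h * g⁻¹) k := by
    rw [show g * h * g⁻¹ * h⁻¹ = (g * h * g⁻¹) * h⁻¹ by group, rel1' (g * h * g⁻¹) h⁻¹ k,
      tmul_inv_left h k, map_inv, phi_phi,
      show g * h * g⁻¹ * h⁻¹ = (g * h * g⁻¹) * h⁻¹ by group, map_inv]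
  have h2 : tmul (g * h * g⁻¹) k = tmul g h * tmul h k * (phi k (tmul g h))⁻¹ := by
    rw [← comm_aux]; group
  have h3 : phi (g * h * g⁻¹ * h⁻¹) ((tmul h k)⁻¹) =
      tmul g h * (tmul h k)⁻¹ * (tmul g h)⁻¹ := (tmul_conj g h _).symm
  rw [h1, h2, h3]
  group

/-- The swap (anti-)involution `g ⊗ h ↦ (h ⊗ g)⁻¹` of `G ⊗ G`. -/
def tswap : TS G →* TS G :=
  PresentedGroup.toGroup (f := fun x : G × G => (tmul x.2 x.1)⁻¹) (by
    rintro r (⟨g, g', h, rfl⟩ | ⟨g, h, h', rfl⟩) <;>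
      simp only [map_mul, map_inv, FreeGroup.lift_apply_of, mul_inv_rev, inv_inv]
    · rw [tmul_rel₂ h g g']; group
    · rw [tmul_rel₁ h h' g]; group)

@[simp] lemma tswap_tmul (g h : G) : tswap (tmul g h) = (tmul h g)⁻¹ :=
  PresentedGroup.toGroup.of _

lemma tswap_phi (x : G) (t : TS G) : tswap (phi x t) = phi x (tswap t) := by
  have h : tswap.comp (phi x) = (phi x).comp (tswap : TS G →* TS G) :=
    ts_hom_ext fun a b => by
      simp only [MonoidHom.comp_apply, phi_tmul, tswap_tmul, map_inv]
  exact DFunLike.congr_fun h t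

/-- `(IIb)`: `k ⊗ [g,h] = (φ_k(h ⊗ g))⁻¹·(h ⊗ g)`. -/
lemma comm_tmul_right (g h k : G) :
    tmul k (g * h * g⁻¹ * h⁻¹) = (phi k (tmul h g))⁻¹ * tmul h g := by
  have h1 := congrArg tswap (comm_tmul_left g h k)
  rw [map_mul, map_inv, tswap_tmul, tswap_phi, tswap_tmul, map_inv, inv_inv] at h1
  rw [← inv_inv (tmul k (g * h * g⁻¹ * h⁻¹)), h1, mul_inv_rev, inv_inv]

end Identities

end NATensor
namespace NATensor

variable {G : Type*} [Group G]

section Functoriality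

variable {H : Type*} [Group H] {K : Type*} [Group K]

lemma tmap_comp (f : H →* K) (g : G →* H) :
    tmap (f.comp g) = (tmap f).comp (tmap g) :=
  ts_hom_ext fun a b => by simp [tmap_tmul]

lemma tmap_id : tmap (MonoidHom.id G) = MonoidHom.id (TS G) :=
  ts_hom_ext fun a b => by simp [tmap_tmul]

lemma tmap_one : tmap (1 : G →* H) = 1 :=
  ts_hom_ext fun a b => by
    rw [tmap_tmul]
    simp [tmul_one_left]

lemma kappa_tmap (f : G →* H) : (kappa H).comp (tmap f) = f.comp (kappa G) :=
  ts_hom_ext fun a b => by simp [tmap_tmul]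

end Functoriality

section EE

/-- The image of `N ⊗ N` in `G ⊗ G`, as the subgroup generated by `n ⊗ n'`. -/
def ee (N : Subgroup G) : Subgroup (TS G) :=
  Subgroup.closure {t | ∃ a ∈ N, ∃ b ∈ N, t = tmul a b}

variable {N : Subgroup G} [hN : N.Normal]

lemma phi_mem_ee (x : G) {t : TS G} (ht : t ∈ ee N) : phi x t ∈ ee N := by
  have hle : (ee N).map (phi x) ≤ ee N := by
    rw [ee, MonoidHom.map_closure]
    refine (Subgroup.closure_le _).mpr ?_
    rintro _ ⟨_, ⟨a, ha, b, hb, rfl⟩, rfl⟩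
    exact Subgroup.subset_closure
      ⟨x * a * x⁻¹, hN.conj_mem a ha x, x * b * x⁻¹, hN.conj_mem b hb x, (phi_tmul x a b).symm⟩
  exact hle ⟨t, ht, rfl⟩

lemma ee_normal : (ee N).Normal := by
  have key : ∀ s : TS G, s ∈ Subgroup.normalizer (ee N : Set (TS G)) := by
    have htop : Subgroup.closure (Set.range (PresentedGroup.of : G × G → TS G)) = ⊤ :=
      PresentedGroup.closure_range_of (rels G)
    intro s
    have hs : s ∈ Subgroup.closure (Set.range (PresentedGroup.of : G × G → TS G)) := by
      rw [htop]; trivial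
    refine (Subgroup.closure_le _).mpr ?_ hs
    rintro _ ⟨⟨g, h⟩, rfl⟩
    rw [SetLike.mem_coe, Subgroup.mem_normalizer_iff]
    intro t
    constructor
    · intro ht
      have := tmul_conj g h t
      show tmul g h * t * (tmul g h)⁻¹ ∈ ee N
      rw [this]
      exact phi_mem_ee _ ht
    · intro ht
      show t ∈ ee N
      have h2 : tmul g h * t * (tmul g h)⁻¹ ∈ ee N := ht
      rw [tmul_conj g h t] at h2
      have h3 := phi_mem_ee (g * h * g⁻¹ * h⁻¹)⁻¹ h2
      rwa [phi_phi, inv_mul_cancel, phi_one] at h3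
  exact ⟨fun t ht s => (Subgroup.mem_normalizer_iff.mp (key s) t).mp ht⟩

open scoped commutatorElement in
/-- If `N` is perfect, all mixed generators `n ⊗ g` and `g ⊗ n` lie in `ee N`. -/
lemma tmul_mem_ee (hperf : commutator ↥N = ⊤) {n : G} (hn : n ∈ N) (g : G) :
    tmul n g ∈ ee N ∧ tmul g n ∈ ee N := by
  have main : ∀ m : ↥N, ∀ x g : G,
      tmul (x * ↑m * x⁻¹) g ∈ ee N ∧ tmul g (x * ↑m * x⁻¹) ∈ ee N := by
    intro m
    have hm : m ∈ Subgroup.closure (commutatorSet ↥N) := by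
      rw [← commutator_eq_closure, hperf]; trivial
    refine Subgroup.closure_induction (k := commutatorSet ↥N)
      (p := fun m _ => ∀ x g : G,
        tmul (x * ↑m * x⁻¹) g ∈ ee N ∧ tmul g (x * ↑m * x⁻¹) ∈ ee N)
      ?_ ?_ ?_ ?_ hm
    · rintro _ ⟨a, b, rfl⟩ x g
      have hco : (↑(⁅a, b⁆ : ↥N) : G) = ↑a * ↑b * (↑a)⁻¹ * (↑b)⁻¹ := by
        push_cast [commutatorElement_def]
        group
      rw [hco]
      set A := x * ↑a * x⁻¹ with hA
      set Bb := x * ↑b * x⁻¹ with hB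
      have hAm : A ∈ N := hN.conj_mem _ a.2 x
      have hBm : Bb ∈ N := hN.conj_mem _ b.2 x
      have harg : x * (↑a * ↑b * (↑a)⁻¹ * (↑b)⁻¹) * x⁻¹ = A * Bb * A⁻¹ * Bb⁻¹ := by
        rw [hA, hB]; group
      rw [harg]
      constructor
      · rw [comm_tmul_left]
        exact mul_mem (Subgroup.subset_closure ⟨A, hAm, Bb, hBm, rfl⟩)
          (inv_mem (phi_mem_ee g (Subgroup.subset_closure ⟨A, hAm, Bb, hBm, rfl⟩)))
      · rw [comm_tmul_right]
        exact mul_mem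
          (inv_mem (phi_mem_ee g (Subgroup.subset_closure ⟨Bb, hBm, A, hAm, rfl⟩)))
          (Subgroup.subset_closure ⟨Bb, hBm, A, hAm, rfl⟩)
    · intro x g
      have h1 : x * ↑(1 : ↥N) * x⁻¹ = (1 : G) := by simp
      rw [h1]
      exact ⟨by rw [tmul_one_left]; exact one_mem _, by rw [tmul_one_right]; exact one_mem _⟩
    · intro m₁ m₂ hm₁ hm₂ ih₁ ih₂ x g
      have hx : x * ↑(m₁ * m₂) * x⁻¹ = (x * ↑m₁ * x⁻¹) * (x * ↑m₂ * x⁻¹) := by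
        push_cast; group
      constructor
      · rw [hx, rel1', phi_tmul,
          show (x * ↑m₁ * x⁻¹) * (x * ↑m₂ * x⁻¹) * (x * ↑m₁ * x⁻¹)⁻¹
            = (x * ↑m₁) * ↑m₂ * (x * ↑m₁)⁻¹ by group]
        exact mul_mem (ih₂ (x * ↑m₁) _).1 (ih₁ x g).1
      · rw [hx, rel2', phi_tmul,
          show (x * ↑m₁ * x⁻¹) * (x * ↑m₂ * x⁻¹) * (x * ↑m₁ * x⁻¹)⁻¹
            = (x * ↑m₁) * ↑m₂ * (x * ↑m₁)⁻¹ by group]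
        exact mul_mem (ih₁ x g).2 (ih₂ (x * ↑m₁) _).2
    · intro m hm ih x g
      have hx : x * ↑m⁻¹ * x⁻¹ = (x * ↑m * x⁻¹)⁻¹ := by push_cast; group
      constructor
      · rw [hx, tmul_inv_left, phi_tmul,
          show (x * ↑m * x⁻¹)⁻¹ * (x * ↑m * x⁻¹) * (x * ↑m * x⁻¹)⁻¹⁻¹ = x * ↑m * x⁻¹ by group]
        exact inv_mem (ih x _).1
      · rw [hx, tmul_inv_right, phi_tmul,
          show (x * ↑m * x⁻¹)⁻¹ * (x * ↑m * x⁻¹) * (x * ↑m * x⁻¹)⁻¹⁻¹ = x * ↑m * x⁻¹ by group]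
        exact inv_mem (ih x _).2
  have := main ⟨n, hn⟩ 1 g
  simpa using this

lemma ee_eq_range (N : Subgroup G) : ee N = (tmap N.subtype).range := by
  apply le_antisymm
  · rw [ee]
    refine (Subgroup.closure_le _).mpr ?_
    rintro _ ⟨a, ha, b, hb, rfl⟩
    exact ⟨tmul (⟨a, ha⟩ : ↥N) (⟨b, hb⟩ : ↥N), by rw [tmap_tmul]; rfl⟩
  · rintro _ ⟨u, rfl⟩
    refine PresentedGroup.generated_by _ ((ee N).comap (tmap N.subtype)) ?_ u
    rintro ⟨a, b⟩
    show tmap N.subtype (tmul a b) ∈ ee N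
    rw [tmap_tmul]
    exact Subgroup.subset_closure ⟨↑a, a.2, ↑b, b.2, rfl⟩

/-- modulo `ee N`, `(gn ⊗ hm) ≡ (g ⊗ h)` for `n, m ∈ N` (given perfectness). -/
lemma tmul_mod_ee (hperf : commutator ↥N = ⊤) (g h n m : G) (hn : n ∈ N) (hm : m ∈ N) :
    ∃ e₁ ∈ ee N, ∃ e₂ ∈ ee N, tmul (g * n) (h * m) = e₁ * (tmul g h * e₂) := by
  refine ⟨phi g (tmul n (h * m)), ?_, phi h (tmul g m), ?_, ?_⟩
  · exact phi_mem_ee g (tmul_mem_ee hperf hn (h * m)).1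
  · exact phi_mem_ee h (tmul_mem_ee hperf hm g).2
  · rw [rel1' g n (h * m), rel2' g h m]

end EE

end NATensor
namespace NATensor

variable {G : Type*} [Group G]

lemma mem_J {t : TS G} : t ∈ J G ↔ kappa G t = 1 := Iff.rfl

end NATensor


open NATensor in
/-- if `N` is a perfect normal subgroup of `G` with a complement, then the
sequence `J(N) → J(G) → J(G/N) → 1` is exact: the map `J(G) → J(G/N)` (restriction of the
map induced by `G → G/N`) is surjective, and its kernel equals the image of `J(N)` under the
map induced by the inclusion `N → G`.  (Topologically:
`π₃(SK(N,1)) → π₃(SK(G,1)) → π₃(SK(G/N,1)) → 0` is exact.) -/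
theorem J_exact_of_perfect_normal_complemented (G : Type*) [Group G]
    (N : Subgroup G) [N.Normal] (hperf : commutator ↥N = ⊤)
    (B : Subgroup G) (hB1 : N ⊔ B = ⊤) (hB2 : N ⊓ B = ⊥) :
    Subgroup.map (tmap (QuotientGroup.mk' N)) (J G) = J (G ⧸ N) ∧
    J G ⊓ MonoidHom.ker (tmap (QuotientGroup.mk' N)) =
      Subgroup.map (tmap N.subtype) (J ↥N) := by
  set π := QuotientGroup.mk' N with hπ
  -- the complement `B` gives a splitting `σ` of `π`
  have hinj : Function.Injective (π.comp B.subtype) := by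
    rw [← MonoidHom.ker_eq_bot_iff, eq_bot_iff]
    intro b hb
    have hb1 : (b : G) ∈ N := by
      rw [MonoidHom.mem_ker, MonoidHom.comp_apply] at hb
      exact (QuotientGroup.eq_one_iff _).mp hb
    have hb2 : (b : G) ∈ N ⊓ B := ⟨hb1, b.2⟩
    rw [hB2, Subgroup.mem_bot] at hb2
    exact Subgroup.mem_bot.mpr (Subtype.ext hb2)
  have hsurj : Function.Surjective (π.comp B.subtype) := by
    intro q
    obtain ⟨g, rfl⟩ := QuotientGroup.mk'_surjective N q
    have hg : g ∈ (↑(N ⊔ B) : Set G) := by rw [hB1]; trivial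
    rw [Subgroup.normal_mul] at hg
    obtain ⟨n, hn, b, hb, rfl⟩ := hg
    refine ⟨⟨b, hb⟩, ?_⟩
    show ((b : G) : G ⧸ N) = ((n * b : G) : G ⧸ N)
    rw [QuotientGroup.mk_mul, (QuotientGroup.eq_one_iff _).mpr hn, one_mul]
  let e : B ≃* G ⧸ N := MulEquiv.ofBijective (π.comp B.subtype) ⟨hinj, hsurj⟩
  let σ : G ⧸ N →* G := B.subtype.comp e.symm.toMonoidHom
  have hπσ : π.comp σ = MonoidHom.id (G ⧸ N) := by
    ext q
    exact e.apply_symm_apply q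
  have hsplit : (tmap π).comp (tmap σ) = MonoidHom.id (TS (G ⧸ N)) := by
    rw [← tmap_comp, hπσ, tmap_id]
  constructor
  · -- surjectivity part
    apply le_antisymm
    · rintro _ ⟨t, ht, rfl⟩
      have ht' : kappa G t = 1 := ht
      show kappa (G ⧸ N) (tmap π t) = 1
      rw [show kappa (G ⧸ N) (tmap π t) = π (kappa G t) from DFunLike.congr_fun (kappa_tmap π) t,
        ht', map_one]
    · intro t ht
      rw [mem_J] at ht
      refine ⟨tmap σ t, ?_, DFunLike.congr_fun hsplit t⟩
      show kappa G (tmap σ t) = 1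
      rw [show kappa G (tmap σ t) = σ (kappa (G ⧸ N) t) from DFunLike.congr_fun (kappa_tmap σ) t,
        ht, map_one]
  · -- exactness at J G
    haveI : (ee N).Normal := ee_normal
    apply le_antisymm
    · rintro t ht
      rw [Subgroup.mem_inf] at ht
      obtain ⟨ht1, ht2⟩ := ht
      rw [MonoidHom.mem_ker] at ht2
      set ρ : G →* G := σ.comp π with hρ
      have hπρ : π.comp ρ = π := by
        rw [hρ, ← MonoidHom.comp_assoc, hπσ, MonoidHom.id_comp]
      have hnmem : ∀ c : G, (ρ c)⁻¹ * c ∈ N := by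
        intro c
        have h1 : π ((ρ c)⁻¹ * c) = 1 := by
          rw [map_mul, map_inv, show π (ρ c) = π c from DFunLike.congr_fun hπρ c,
            inv_mul_cancel]
        exact (QuotientGroup.eq_one_iff _).mp h1
      have hcong : (QuotientGroup.mk' (ee N)).comp (tmap ρ) = QuotientGroup.mk' (ee N) := by
        refine ts_hom_ext fun a b => ?_
        obtain ⟨e₁, he₁, e₂, he₂, heq⟩ :=
          tmul_mod_ee hperf (ρ a) (ρ b) ((ρ a)⁻¹ * a) ((ρ b)⁻¹ * b) (hnmem a) (hnmem b)
        rw [mul_inv_cancel_left, mul_inv_cancel_left] at heq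
        rw [MonoidHom.comp_apply, tmap_tmul, heq, map_mul, map_mul]
        simp only [QuotientGroup.mk'_apply]
        rw [(QuotientGroup.eq_one_iff _).mpr he₁, (QuotientGroup.eq_one_iff _).mpr he₂,
          one_mul, mul_one]
      have hρ1 : tmap ρ t = 1 := by
        rw [hρ, tmap_comp, MonoidHom.comp_apply, ht2, map_one]
      have hmem : t ∈ ee N := by
        have h2 := DFunLike.congr_fun hcong t
        rw [MonoidHom.comp_apply, hρ1, map_one] at h2
        exact (QuotientGroup.eq_one_iff t).mp h2.symm
      rw [ee_eq_range] at hmem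
      obtain ⟨u, rfl⟩ := hmem
      have hκu : kappa ↥N u = 1 := by
        have h3 : N.subtype (kappa ↥N u) = kappa G (tmap N.subtype u) :=
          (DFunLike.congr_fun (kappa_tmap N.subtype) u).symm
        have ht1' : kappa G (tmap N.subtype u) = 1 := ht1
        rw [ht1'] at h3
        exact Subtype.ext h3
      exact ⟨u, mem_J.mpr hκu, rfl⟩
    · rintro _ ⟨u, hu, rfl⟩
      rw [Subgroup.mem_inf]
      constructor
      · show kappa G (tmap N.subtype u) = 1
        rw [show kappa G (tmap N.subtype u) = N.subtype (kappa ↥N u) from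
            DFunLike.congr_fun (kappa_tmap N.subtype) u,
          mem_J.mp hu, map_one]
      · rw [MonoidHom.mem_ker]
        have htriv : π.comp N.subtype = 1 := by
          ext n
          exact (QuotientGroup.eq_one_iff _).mpr n.2
        have hc := DFunLike.congr_fun (tmap_comp π N.subtype) u
        rw [htriv, tmap_one, MonoidHom.one_apply] at hc
        exact hc.symm
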